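/- Let b > 0 and define, on the domain D = { (α, β) ∈ ℂ² : |β|²(1 + |α|²)² > b² }, the map F(α, β) = (m_1, m_2) with Q = √(|β|²(1 + |α|²)² − b²), m_1 = ((1 − |α|²)/(2(1 + |α|²))) Q and m_2 = (|α|²/(1 + |α|²)) Q. Then the image of F is exactly { (m_1, m_2) ∈ ℝ² : m_2 ≥ 0, 2 m_1 + m_2 > 0 }. -/

import Mathlib

/-- Phase change of the Eguchi-Hanson metric, Case 1: for `b > 0`, on the domain
`D = {(α, β) : |β|²(1+|α|²)² > b²}`, the map
`F(α,β) = (((1−|α|²)/(2(1+|α|²)))Q, (|α|²/(1+|α|²))Q)` with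
`Q = √(|β|²(1+|α|²)² − b²)` has image exactly
`{(m₁, m₂) : m₂ ≥ 0, 2m₁ + m₂ > 0}`. -/
theorem eguchi_hanson_phase_change_outer_image
    (b : ℝ) (hb : 0 < b)
    (F : ℂ × ℂ → ℝ × ℝ)
    (hF : ∀ α β : ℂ, F (α, β) =
      (((1 - ‖α‖ ^ 2) / (2 * (1 + ‖α‖ ^ 2))) *
          Real.sqrt (‖β‖ ^ 2 * (1 + ‖α‖ ^ 2) ^ 2 - b ^ 2),
        (‖α‖ ^ 2 / (1 + ‖α‖ ^ 2)) *
          Real.sqrt (‖β‖ ^ 2 * (1 + ‖α‖ ^ 2) ^ 2 - b ^ 2))) :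
    F '' { q : ℂ × ℂ |
        b ^ 2 < ‖q.2‖ ^ 2 * (1 + ‖q.1‖ ^ 2) ^ 2 }
      = { m : ℝ × ℝ | 0 ≤ m.2 ∧ 0 < 2 * m.1 + m.2 } := by
  ext m
  constructor
  · rintro ⟨⟨α, β⟩, hmem, rfl⟩
    simp only [Set.mem_setOf_eq] at hmem ⊢
    rw [hF]
    set a := ‖α‖ ^ 2 with ha
    have ha0 : 0 ≤ a := sq_nonneg _
    have h1a : 0 < 1 + a := by linarith
    set Q := Real.sqrt (‖β‖ ^ 2 * (1 + a) ^ 2 - b ^ 2) with hQ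
    have hQpos : 0 < Q := Real.sqrt_pos.mpr (by linarith)
    constructor
    · positivity
    · have key : 2 * ((1 - a) / (2 * (1 + a)) * Q) + a / (1 + a) * Q = Q / (1 + a) := by
        field_simp
        ring
      simp only
      rw [key]
      positivity
  · rintro ⟨h2, hS⟩
    obtain ⟨m1, m2⟩ := m
    simp only [Set.mem_setOf_eq] at h2 hS
    set S : ℝ := 2 * m1 + m2 with hSdef
    set t : ℝ := m2 / S with htdef
    set Q : ℝ := S + m2 with hQdef
    have ht0 : 0 ≤ t := div_nonneg h2 hS.le
    have h1t : 0 < 1 + t := by linarith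
    have hQpos : 0 < Q := by simp only [hQdef]; linarith
    refine ⟨((Real.sqrt t : ℂ), ((Real.sqrt (Q ^ 2 + b ^ 2) / (1 + t) : ℝ) : ℂ)), ?_, ?_⟩
    · simp only [Set.mem_setOf_eq, Complex.norm_real, Real.norm_eq_abs]
      rw [abs_of_nonneg (by positivity), abs_of_nonneg (Real.sqrt_nonneg _),
        Real.sq_sqrt ht0]
      rw [div_pow, Real.sq_sqrt (by positivity), div_mul_cancel₀ _ (by positivity)]
      nlinarith
    · rw [hF]
      simp only [Complex.norm_real, Real.norm_eq_abs]
      rw [abs_of_nonneg (by positivity : (0:ℝ) ≤ Real.sqrt (Q ^ 2 + b ^ 2) / (1 + t)),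
        abs_of_nonneg (Real.sqrt_nonneg t), Real.sq_sqrt ht0,
        div_pow, Real.sq_sqrt (by positivity : (0:ℝ) ≤ Q ^ 2 + b ^ 2),
        div_mul_cancel₀ _ (by positivity : ((1:ℝ) + t) ^ 2 ≠ 0)]
      have : Q ^ 2 + b ^ 2 - b ^ 2 = Q ^ 2 := by ring
      rw [this, Real.sqrt_sq hQpos.le]
      have hSne : S ≠ 0 := hS.ne'
      have hm2 : m2 = t * S := by rw [htdef, div_mul_cancel₀ _ hSne]
      have ht1S : (1 + t) * S = Q := by
        rw [hQdef]; rw [hm2]; ring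
      refine Prod.ext ?_ ?_
      · simp only
        field_simp
        nlinarith [ht1S, hm2]
      · simp only
        field_simp
        nlinarith [ht1S, hm2]
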